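/- Let n ≥ 1 and let F : ℝⁿ → ℝ be a Minkowski norm, i.e. F is continuous, F(y) > 0 for every y ≠ 0, F(s·y) = s·F(y) for all s ≥ 0 and y ∈ ℝⁿ, and F² is twice continuously differentiable on ℝⁿ∖{0}. For z ≠ 0 define the fundamental form g_z(v,w) := (1/2)·D²(F²)(z)(v,w) (one half the second Fréchet derivative of F² at z), and set g_0(v,w) := 0. Suppose Λ ≥ 1 is a real number such that F(v)²/Λ ≤ g_z(v,v) ≤ Λ·F(v)² for every z ≠ 0 and every v ∈ ℝⁿ. Then for all ξ, η ∈ ℝⁿ: F(ξ+η)² ≥ F(ξ)² + 2·g_ξ(ξ,η) + F(η)²/Λ. -/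

import Mathlib

open Filter Topology

variable {E : Type*} [NormedAddCommGroup E] [NormedSpace ℝ E]

/-- Euler's identity for a 2-homogeneous function. -/
lemma aux_euler1 (f : E → ℝ) (z : E)
    (hdf : DifferentiableAt ℝ f z)
    (hhom : ∀ s : ℝ, 0 < s → f (s • z) = s ^ 2 * f z) :
    fderiv ℝ f z z = 2 * f z := by
  have hc : HasDerivAt (fun s : ℝ => s • z) z 1 := by
    simpa using (hasDerivAt_id (1 : ℝ)).smul_const z
  have h1 : HasDerivAt (fun s : ℝ => f (s • z)) (fderiv ℝ f z z) 1 := by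
    have hz1 : HasFDerivAt f (fderiv ℝ f z) ((1:ℝ) • z) := by
      simpa using hdf.hasFDerivAt
    exact hz1.comp_hasDerivAt (1 : ℝ) hc
  have heq : (fun s : ℝ => s ^ 2 * f z) =ᶠ[𝓝 (1 : ℝ)] fun s : ℝ => f (s • z) := by
    filter_upwards [Ioi_mem_nhds (zero_lt_one)] with s hs
    exact (hhom s hs).symm
  have h2 : HasDerivAt (fun s : ℝ => s ^ 2 * f z) (fderiv ℝ f z z) 1 :=
    h1.congr_of_eventuallyEq heq
  have h3 : HasDerivAt (fun s : ℝ => s ^ 2 * f z) (2 * f z) 1 := by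
    simpa using (hasDerivAt_pow 2 (1 : ℝ)).mul_const (f z)
  exact h2.unique h3

/-- Differentiated Euler identity. -/
lemma aux_euler2 (f : E → ℝ) (z : E)
    (hdf : DifferentiableAt ℝ f z)
    (hB : DifferentiableAt ℝ (fderiv ℝ f) z)
    (hE : ∀ᶠ y in 𝓝 z, fderiv ℝ f y y = 2 * f y) (w : E) :
    fderiv ℝ (fun y => fderiv ℝ f y z) z w = fderiv ℝ f z w := by
  have hA : HasFDerivAt (fun y => fderiv ℝ f y y)
      ((fderiv ℝ f z).comp (ContinuousLinearMap.id ℝ E)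
        + (fderiv ℝ (fderiv ℝ f) z).flip z) z :=
    hB.hasFDerivAt.clm_apply (hasFDerivAt_id z)
  have heq : (fun y => 2 * f y) =ᶠ[𝓝 z] fun y => fderiv ℝ f y y := by
    filter_upwards [hE] with y hy; exact hy.symm
  have h2 : HasFDerivAt (fun y => 2 * f y)
      ((fderiv ℝ f z).comp (ContinuousLinearMap.id ℝ E)
        + (fderiv ℝ (fderiv ℝ f) z).flip z) z :=
    hA.congr_of_eventuallyEq heq
  have h3 : HasFDerivAt (fun y => 2 * f y) ((2 : ℝ) • fderiv ℝ f z) z :=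
    hdf.hasFDerivAt.const_mul 2
  have hEq := h2.unique h3
  have h4 : fderiv ℝ (fun y => fderiv ℝ f y z) z
      = (fderiv ℝ (fderiv ℝ f) z).flip z := by
    have := fderiv_clm_apply (𝕜 := ℝ) (c := fderiv ℝ f) (u := fun _ => z)
      hB (differentiableAt_const z)
    simpa using this
  have h5 := congrArg (fun (L : E →L[ℝ] ℝ) => L w) hEq
  simp only [ContinuousLinearMap.add_apply, ContinuousLinearMap.coe_comp',
    Function.comp_apply, ContinuousLinearMap.coe_id', id_eq,
    ContinuousLinearMap.flip_apply, ContinuousLinearMap.smul_apply,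
    smul_eq_mul] at h5
  rw [h4]
  simp only [ContinuousLinearMap.flip_apply]
  linarith

set_option maxHeartbeats 1000000 in
/-- **Refined Cauchy–Schwarz inequality for Minkowski norms** (Theorem 3.4).
`F` is a Minkowski norm on `ℝⁿ`, `g` its fundamental form (one half the second
Fréchet derivative of `F²`, set to `0` at the origin), and `Λ ≥ 1` bounds the
uniformity constant.  Then `F(ξ+η)² ≥ F(ξ)² + 2 g_ξ(ξ,η) + F(η)²/Λ`. -/
theorem stmt_0 (n : ℕ) (hn : 1 ≤ n)
    (F : EuclideanSpace ℝ (Fin n) → ℝ)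
    (hFcont : Continuous F)
    (hFpos : ∀ y : EuclideanSpace ℝ (Fin n), y ≠ 0 → 0 < F y)
    (hFhom : ∀ s : ℝ, 0 ≤ s → ∀ y : EuclideanSpace ℝ (Fin n), F (s • y) = s * F y)
    (hFsmooth : ContDiffOn ℝ 2 (fun y => (F y) ^ 2) {(0 : EuclideanSpace ℝ (Fin n))}ᶜ)
    (g : EuclideanSpace ℝ (Fin n) → EuclideanSpace ℝ (Fin n) → EuclideanSpace ℝ (Fin n) → ℝ)
    (hg : ∀ z, z ≠ 0 → ∀ v w : EuclideanSpace ℝ (Fin n),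
      g z v w = (1 / 2) * fderiv ℝ (fun y => fderiv ℝ (fun y' => (F y') ^ 2) y v) z w)
    (hg0 : ∀ v w : EuclideanSpace ℝ (Fin n), g 0 v w = 0)
    (Λ : ℝ) (hΛ : 1 ≤ Λ)
    (hunif : ∀ z, z ≠ 0 → ∀ v : EuclideanSpace ℝ (Fin n),
      (F v) ^ 2 / Λ ≤ g z v v ∧ g z v v ≤ Λ * (F v) ^ 2) :
    ∀ ξ η : EuclideanSpace ℝ (Fin n),
      (F (ξ + η)) ^ 2 ≥ (F ξ) ^ 2 + 2 * g ξ ξ η + (F η) ^ 2 / Λ := by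
  intro ξ η
  set f : EuclideanSpace ℝ (Fin n) → ℝ := fun y => (F y) ^ 2 with hfdef
  have hΛ0 : (0:ℝ) < Λ := lt_of_lt_of_le one_pos hΛ
  have hF0 : F 0 = 0 := by
    have h := hFhom 0 le_rfl 0
    simpa using h
  show f (ξ + η) ≥ f ξ + 2 * g ξ ξ η + f η / Λ
  have hunif' : ∀ z, z ≠ 0 → ∀ v : EuclideanSpace ℝ (Fin n), f v / Λ ≤ g z v v ∧ g z v v ≤ Λ * f v := hunif
  have hopen : IsOpen ({(0:EuclideanSpace ℝ (Fin n))}ᶜ) := isOpen_compl_singleton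
  have hdf : ∀ z : EuclideanSpace ℝ (Fin n), z ≠ 0 → DifferentiableAt ℝ f z := fun z hz =>
    (hFsmooth.contDiffAt (hopen.mem_nhds hz)).differentiableAt two_ne_zero
  have hB1 : ContDiffOn ℝ 1 (fderiv ℝ f) {(0:EuclideanSpace ℝ (Fin n))}ᶜ :=
    hFsmooth.fderiv_of_isOpen (m := 1) hopen (by norm_num)
  have hdB : ∀ z : EuclideanSpace ℝ (Fin n), z ≠ 0 → DifferentiableAt ℝ (fderiv ℝ f) z := fun z hz =>
    (hB1.contDiffAt (hopen.mem_nhds hz)).differentiableAt one_ne_zero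
  have hdf2 : ∀ (v z : EuclideanSpace ℝ (Fin n)), z ≠ 0 → DifferentiableAt ℝ (fun y => fderiv ℝ f y v) z :=
    fun v z hz => (hdB z hz).clm_apply (differentiableAt_const v)
  have hhomf : ∀ (s : ℝ), 0 ≤ s → ∀ y : EuclideanSpace ℝ (Fin n), f (s • y) = s ^ 2 * f y := by
    intro s hs y
    simp only [hfdef]
    rw [hFhom s hs y]; ring
  have heuler1 : ∀ z : EuclideanSpace ℝ (Fin n), z ≠ 0 → fderiv ℝ f z z = 2 * f z := fun z hz =>
    aux_euler1 f z (hdf z hz) (fun s hs => hhomf s hs.le z)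
  have heuler2 : ∀ z : EuclideanSpace ℝ (Fin n), z ≠ 0 → ∀ w,
      fderiv ℝ (fun y => fderiv ℝ f y z) z w = fderiv ℝ f z w := by
    intro z hz w
    refine aux_euler2 f z (hdf z hz) (hdB z hz) ?_ w
    filter_upwards [hopen.mem_nhds hz] with y hy
    exact heuler1 y hy
  have hgE : ∀ z : EuclideanSpace ℝ (Fin n), z ≠ 0 → ∀ w, g z z w = (1/2) * fderiv ℝ f z w := by
    intro z hz w
    rw [hg z hz z w, heuler2 z hz w]
  have hgval : ∀ z : EuclideanSpace ℝ (Fin n), z ≠ 0 → g z z z = f z := by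
    intro z hz
    rw [hgE z hz z, heuler1 z hz]; ring
  have hsign : ∀ z : EuclideanSpace ℝ (Fin n), z ≠ 0 → ∀ v : EuclideanSpace ℝ (Fin n), g z (-v) (-v) = g z v v := by
    intro z hz v
    rw [hg z hz, hg z hz]
    have h1 : (fun y => fderiv ℝ f y (-v)) = fun y => -(fderiv ℝ f y v) := by
      funext y; exact (fderiv ℝ f y).map_neg v
    rw [h1, fderiv_fun_neg]
    simp
  have hcross : ∀ v : EuclideanSpace ℝ (Fin n), v ≠ 0 → f (-v) ≤ Λ * f v := by
    intro v hv
    have h := (hunif' v hv (-v)).1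
    rw [hsign v hv v, hgval v hv] at h
    have := (div_le_iff₀ hΛ0).1 h
    linarith
  -- trivial cases
  by_cases hη : η = 0
  · subst hη
    have hg00 : g ξ ξ 0 = 0 := by
      by_cases hξ : ξ = 0
      · subst hξ; exact hg0 0 0
      · rw [hg ξ hξ]; simp
    simp [hg00, hfdef, hF0]
  by_cases hξ : ξ = 0
  · subst hξ
    have h1 : f η / Λ ≤ f η := div_le_self (sq_nonneg _) hΛ
    simp only [hg0, zero_add, mul_zero, hfdef]
    simpa [hF0] using h1
  -- line derivative setup
  have hline : ∀ t : ℝ, HasDerivAt (fun s : ℝ => ξ + s • η) η t := fun t => by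
    simpa using ((hasDerivAt_id t).smul_const η).const_add ξ
  have hchain : ∀ t : ℝ, ξ + t • η ≠ 0 →
      HasDerivAt (fun s : ℝ => f (ξ + s • η)) (fderiv ℝ f (ξ + t • η) η) t := by
    intro t ht
    exact (hdf _ ht).hasFDerivAt.comp_hasDerivAt t (hline t)
  have hchain2 : ∀ t : ℝ, ξ + t • η ≠ 0 →
      HasDerivAt (fun s : ℝ => fderiv ℝ f (ξ + s • η) η) (2 * g (ξ + t • η) η η) t := by
    intro t ht
    have h := (hdf2 η _ ht).hasFDerivAt.comp_hasDerivAt t (hline t)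
    have h2 : fderiv ℝ (fun y => fderiv ℝ f y η) (ξ + t • η) η = 2 * g (ξ + t • η) η η := by
      rw [hg _ ht η η]; ring
    rw [h2] at h
    exact h
  by_cases hdep : ∃ c : ℝ, ξ = c • η
  · -- collinear case
    obtain ⟨c, hcξ⟩ := hdep
    have hc0 : c ≠ 0 := by
      rintro rfl; exact hξ (by simp [hcξ])
    have ha2 : 0 ≤ f η := sq_nonneg _
    have hb2 : 0 ≤ f (-η) := sq_nonneg _
    have hcross1 : f η ≤ Λ * f (-η) := by
      have := hcross (-η) (neg_ne_zero.2 hη)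
      simpa using this
    have hξ0 : ξ + (0:ℝ) • η ≠ 0 := by simpa using hξ
    have hD2 : f η / Λ ≤ f η := div_le_self ha2 hΛ
    have hD : f η / Λ ≤ f (-η) := by
      rw [div_le_iff₀ hΛ0]; linarith
    rcases lt_or_gt_of_ne hc0 with hcneg | hcpos
    · -- c < 0
      have hkey : fderiv ℝ f ξ η = 2 * c * f (-η) := by
        have heq : (fun s : ℝ => (c+s)^2 * f (-η)) =ᶠ[𝓝 (0:ℝ)]
            (fun s : ℝ => f (ξ + s • η)) := by
          filter_upwards [Ioo_mem_nhds (by linarith : c < (0:ℝ))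
            (by linarith : (0:ℝ) < -c)] with s hs
          have h1 : (0:ℝ) ≤ -(c + s) := by
            obtain ⟨hs1, hs2⟩ := hs; linarith
          have h2 : ξ + s • η = (-(c+s)) • (-η) := by
            rw [hcξ, smul_neg, neg_smul, neg_neg, ← add_smul]
          rw [h2, hhomf _ h1 (-η)]
          ring
        have hpoly : HasDerivAt (fun s : ℝ => (c+s)^2 * f (-η)) (2 * c * f (-η)) 0 := by
          have h := (((hasDerivAt_id (0:ℝ)).const_add c).pow 2).mul_const (f (-η))
          simpa using h
        have h0 : HasDerivAt (fun s : ℝ => f (ξ + s • η)) (2 * c * f (-η)) 0 :=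
          hpoly.congr_of_eventuallyEq heq.symm
        have h1 := hchain 0 hξ0
        rw [show ξ + (0:ℝ) • η = ξ by simp] at h1
        exact h1.unique h0
      have hgξ : g ξ ξ η = c * f (-η) := by
        rw [hgE ξ hξ η, hkey]; ring
      have hfξ : f ξ = c^2 * f (-η) := by
        have h2 : ξ = (-c) • (-η) := by rw [hcξ, smul_neg, neg_smul, neg_neg]
        rw [h2, hhomf _ (by linarith) (-η)]
        ring
      rcases le_or_gt 0 (c + 1) with hc1 | hc1
      · have hfs : f (ξ + η) = (c+1)^2 * f η := by
          have h2 : ξ + η = (c+1) • η := by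
            rw [hcξ, add_smul, one_smul]
          rw [h2, hhomf _ hc1 η]
        rw [hfs, hfξ, hgξ]
        have h1 : (c^2 + 2*c) * (f (-η) - f η / Λ) ≤ 0 :=
          mul_nonpos_of_nonpos_of_nonneg (by nlinarith) (by linarith)
        have h2 : 0 ≤ (1+c)^2 * (f η - f η / Λ) :=
          mul_nonneg (sq_nonneg _) (by linarith)
        nlinarith [h1, h2]
      · have hfs : f (ξ + η) = (c+1)^2 * f (-η) := by
          have h2 : ξ + η = (-(c+1)) • (-η) := by
            rw [smul_neg, neg_smul, neg_neg, hcξ, add_smul, one_smul]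
          rw [h2, hhomf _ (by linarith) (-η)]
          ring
        rw [hfs, hfξ, hgξ]
        nlinarith [hD]
    · -- c > 0
      have hkey : fderiv ℝ f ξ η = 2 * c * f η := by
        have heq : (fun s : ℝ => (c+s)^2 * f η) =ᶠ[𝓝 (0:ℝ)]
            (fun s : ℝ => f (ξ + s • η)) := by
          filter_upwards [Ioo_mem_nhds (by linarith : -c < (0:ℝ)) hcpos] with s hs
          have h1 : (0:ℝ) ≤ c + s := by
            obtain ⟨hs1, hs2⟩ := hs; linarith
          have h2 : ξ + s • η = (c+s) • η := by rw [hcξ, ← add_smul]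
          rw [h2, hhomf _ h1 η]
        have hpoly : HasDerivAt (fun s : ℝ => (c+s)^2 * f η) (2 * c * f η) 0 := by
          have h := (((hasDerivAt_id (0:ℝ)).const_add c).pow 2).mul_const (f η)
          simpa using h
        have h0 : HasDerivAt (fun s : ℝ => f (ξ + s • η)) (2 * c * f η) 0 :=
          hpoly.congr_of_eventuallyEq heq.symm
        have h1 := hchain 0 hξ0
        rw [show ξ + (0:ℝ) • η = ξ by simp] at h1
        exact h1.unique h0
      have hgξ : g ξ ξ η = c * f η := by
        rw [hgE ξ hξ η, hkey]; ring
      have hfξ : f ξ = c^2 * f η := by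
        rw [hcξ, hhomf _ hcpos.le η]
      have hfs : f (ξ + η) = (c+1)^2 * f η := by
        have h2 : ξ + η = (c+1) • η := by rw [hcξ, add_smul, one_smul]
        rw [h2, hhomf _ (by linarith) η]
      rw [hfs, hfξ, hgξ]
      nlinarith [hD2]
  · -- linearly independent case
    push_neg at hdep
    have hne : ∀ t : ℝ, ξ + t • η ≠ 0 := by
      intro t h
      exact hdep (-t) (by rw [neg_smul, ← sub_eq_zero]; simpa [sub_neg_eq_add] using h)
    set G : ℝ → ℝ := fun t => fderiv ℝ f (ξ + t • η) η with hGdef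
    set K : ℝ := f η / Λ with hKdef
    have hKg : ∀ t : ℝ, 2 * K ≤ 2 * g (ξ + t • η) η η := by
      intro t
      have := (hunif' _ (hne t) η).1
      rw [hKdef]; linarith
    have hH' : ∀ t : ℝ, HasDerivAt (fun s => G s - 2 * K * s)
        (2 * g (ξ + t • η) η η - 2 * K) t := by
      intro t
      have h1 : HasDerivAt (fun s : ℝ => 2 * K * s) (2 * K) t := by
        simpa using (hasDerivAt_id t).const_mul (2 * K)
      exact (hchain2 t (hne t)).sub h1
    have hHmono : Monotone (fun s => G s - 2 * K * s) :=
      monotone_of_deriv_nonneg (fun t => (hH' t).differentiableAt)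
        (fun t => by rw [(hH' t).deriv]; linarith [hKg t])
    have hGlb : ∀ t : ℝ, 0 ≤ t → G 0 + 2 * K * t ≤ G t := by
      intro t ht
      have := hHmono ht
      simp only [mul_zero, sub_zero] at this
      linarith
    set ψ : ℝ → ℝ := fun t => f (ξ + t • η) - t * G 0 - t^2 * K with hψdef
    have hψ' : ∀ t : ℝ, HasDerivAt ψ (G t - G 0 - 2 * t * K) t := by
      intro t
      have h1 : HasDerivAt (fun s : ℝ => s * G 0) (G 0) t := by
        simpa using (hasDerivAt_id t).mul_const (G 0)
      have h2 : HasDerivAt (fun s : ℝ => s^2 * K) (2 * t * K) t := by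
        have := (hasDerivAt_pow 2 t).mul_const K
        simpa [mul_comm, mul_assoc] using this
      exact ((hchain t (hne t)).sub h1).sub h2
    have hψmono : MonotoneOn ψ (Set.Icc (0:ℝ) 1) := by
      apply monotoneOn_of_deriv_nonneg (convex_Icc 0 1)
      · exact (Differentiable.continuous (fun t => (hψ' t).differentiableAt)).continuousOn
      · exact fun t _ => ((hψ' t).differentiableAt).differentiableWithinAt
      · intro t ht
        rw [interior_Icc] at ht
        rw [(hψ' t).deriv]
        have := hGlb t ht.1.le
        linarith
    have hfinal := hψmono (Set.mem_Icc.2 ⟨le_rfl, zero_le_one⟩)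
      (Set.mem_Icc.2 ⟨zero_le_one, le_rfl⟩) zero_le_one
    have hψ0 : ψ 0 = f ξ := by simp [hψdef]
    have hψ1 : ψ 1 = f (ξ + η) - G 0 - K := by simp [hψdef]
    have hG0 : G 0 = 2 * g ξ ξ η := by
      rw [hGdef]
      simp only [zero_smul, add_zero]
      rw [hgE ξ hξ η]; ring
    rw [hψ0, hψ1, hG0] at hfinal
    rw [hKdef] at hfinal
    linarith
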